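/- For every real r > 1 there exists a constant C_r > 0 such that for every τ ≥ 0 and all a, b, c : ℤ² → [0,∞]: ∑_{(j,k)∈ℤ²×ℤ²} a(j) · ‖k‖ · b(k) · ‖j+k‖^{r} e^{τ‖j+k‖} · c(j+k) ≤ C_r [ (a(0) + S_{r,τ}(a)) · S_{r+1/2,τ}(b) · S_{r+1/2,τ}(c) + S_{r+1/2,τ}(a) · S_{r+1/2,τ}(b) · S_{r,τ}(c) ]. (This is the Fourier-coefficient form of the trilinear transport estimate |⟨A^r e^{τA}(f·∇g), A^r e^{τA}h⟩| of Lemma A.1.) -/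

import Mathlib

open scoped ENNReal

noncomputable section

/-- Euclidean norm of a lattice point `k ∈ ℤ²` viewed as a vector in `ℝ²`. -/
def nz (k : ℤ × ℤ) : ℝ := Real.sqrt ((k.1 : ℝ) ^ 2 + (k.2 : ℝ) ^ 2)

/-- The weighted ℓ²-norm `S_{ρ,τ}(a) = (∑_k ‖k‖^{2ρ} e^{2τ‖k‖} a(k)²)^{1/2}`. -/
def S (ρ τ : ℝ) (a : ℤ × ℤ → ℝ≥0∞) : ℝ≥0∞ :=
  (∑' k : ℤ × ℤ, ENNReal.ofReal (nz k ^ (2 * ρ) * Real.exp (2 * τ * nz k)) * (a k) ^ 2)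
    ^ ((1 : ℝ) / 2)

lemma nz_nonneg (k : ℤ × ℤ) : 0 ≤ nz k := Real.sqrt_nonneg _

lemma nz_zero : nz 0 = 0 := by simp [nz]

lemma one_le_nz {k : ℤ × ℤ} (h : k ≠ 0) : 1 ≤ nz k := by
  have h1 : (1 : ℝ) ≤ (k.1 : ℝ) ^ 2 + (k.2 : ℝ) ^ 2 := by
    have : k.1 ≠ 0 ∨ k.2 ≠ 0 := by
      by_contra hc
      push_neg at hc
      exact h (Prod.ext hc.1 hc.2)
    rcases this with h1 | h1
    · have : (1 : ℝ) ≤ |(k.1 : ℝ)| := by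
        rw [← Int.cast_abs]; exact_mod_cast Int.one_le_abs h1
      nlinarith [sq_nonneg ((k.2 : ℝ)), sq_abs ((k.1 : ℝ))]
    · have : (1 : ℝ) ≤ |(k.2 : ℝ)| := by
        rw [← Int.cast_abs]; exact_mod_cast Int.one_le_abs h1
      nlinarith [sq_nonneg ((k.1 : ℝ)), sq_abs ((k.2 : ℝ))]
  calc (1 : ℝ) = Real.sqrt 1 := by simp
    _ ≤ nz k := Real.sqrt_le_sqrt h1

/-- Cauchy–Schwarz for `tsum` in `ℝ≥0∞`. -/
lemma cs (f g : ℤ × ℤ → ℝ≥0∞) :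
    ∑' k, f k * g k ≤ (∑' k, f k ^ 2) ^ ((1 : ℝ) / 2) * (∑' k, g k ^ 2) ^ ((1 : ℝ) / 2) := by
  have hpq : Real.HolderConjugate 2 2 := Real.HolderConjugate.two_two
  have h := ENNReal.lintegral_mul_le_Lp_mul_Lq (MeasureTheory.Measure.count (α := ℤ × ℤ)) hpq
      (f := f) (g := g) Measurable.of_discrete.aemeasurable Measurable.of_discrete.aemeasurable
  simp only [Pi.mul_apply, MeasureTheory.lintegral_count] at h
  have h2 : ∀ x : ℝ≥0∞, x ^ (2 : ℝ) = x ^ (2 : ℕ) := fun x => by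
    rw [← ENNReal.rpow_natCast x 2]; norm_num
  simpa only [h2] using h

/-- Young-type trilinear bound: ℓ¹ × ℓ² × ℓ². -/
lemma young (A B H : ℤ × ℤ → ℝ≥0∞) :
    (∑' p : (ℤ × ℤ) × (ℤ × ℤ), A p.1 * (B p.2 * H (p.1 + p.2)))
      ≤ (∑' j, A j) *
        ((∑' k, B k ^ 2) ^ ((1 : ℝ) / 2) * (∑' m, H m ^ 2) ^ ((1 : ℝ) / 2)) := by
  rw [ENNReal.tsum_prod (f := fun j k => A j * (B k * H (j + k)))]
  calc ∑' j, ∑' k, A j * (B k * H (j + k))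
      = ∑' j, A j * ∑' k, B k * H (j + k) := by
        refine tsum_congr fun j => ?_
        rw [ENNReal.tsum_mul_left]
    _ ≤ ∑' j, A j * ((∑' k, B k ^ 2) ^ ((1 : ℝ) / 2) * (∑' m, H m ^ 2) ^ ((1 : ℝ) / 2)) := by
        refine ENNReal.tsum_le_tsum fun j => mul_le_mul_right ?_ _
        have h1 : ∑' k, H (j + k) ^ 2 = ∑' m, H m ^ 2 :=
          (Equiv.addLeft j).tsum_eq fun m => H m ^ 2
        calc ∑' k, B k * H (j + k)
            ≤ (∑' k, B k ^ 2) ^ ((1 : ℝ) / 2) * (∑' k, H (j + k) ^ 2) ^ ((1 : ℝ) / 2) :=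
              cs _ _
          _ = _ := by rw [h1]
    _ = _ := ENNReal.tsum_mul_right

lemma wsq (ρ x t : ℝ) (hx : 0 ≤ x) :
    (x ^ ρ * Real.exp t) ^ 2 = x ^ (2 * ρ) * Real.exp (2 * t) := by
  rw [mul_pow, ← Real.rpow_natCast (x ^ ρ) 2, ← Real.rpow_mul hx, pow_two, ← Real.exp_add,
    show ρ * (2 : ℕ) = 2 * ρ by push_cast; ring, show t + t = 2 * t by ring]

/-- The weighted function whose ℓ²-norm is `S ρ τ f`. -/
def W (ρ τ : ℝ) (f : ℤ × ℤ → ℝ≥0∞) (k : ℤ × ℤ) : ℝ≥0∞ :=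
  ENNReal.ofReal (nz k ^ ρ * Real.exp (τ * nz k)) * f k

lemma S_eq (ρ τ : ℝ) (f : ℤ × ℤ → ℝ≥0∞) :
    S ρ τ f = (∑' k, W ρ τ f k ^ 2) ^ ((1 : ℝ) / 2) := by
  unfold S W
  congr 1
  refine tsum_congr fun k => ?_
  rw [mul_pow, ← ENNReal.ofReal_pow (mul_nonneg (Real.rpow_nonneg (nz_nonneg k) _) (Real.exp_nonneg _)), wsq ρ (nz k) (τ * nz k) (nz_nonneg k),
    ← mul_assoc]

lemma Ksq_lt_top {r : ℝ} (hr : 1 < r) :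
    (∑' j : ℤ × ℤ, ENNReal.ofReal (nz j ^ (-(2 * r)))) < ⊤ := by
  have hsum : Summable fun j : ℤ × ℤ => nz j ^ (-(2 * r)) := by
    have h2 : (2 : ℝ) < 2 * r := by linarith
    have hE := EisensteinSeries.summable_one_div_norm_rpow h2
    rw [← (finTwoArrowEquiv ℤ).summable_iff]
    refine hE.of_nonneg_of_le (fun x => Real.rpow_nonneg (nz_nonneg _) _) (fun x => ?_)
    rcases eq_or_ne x 0 with hx | hx
    · subst hx
      have h0 : nz ((finTwoArrowEquiv ℤ) 0) = 0 := by simp [finTwoArrowEquiv, nz]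
      simp only [Function.comp_apply, h0]
      rw [Real.zero_rpow (by linarith : -(2 * r) ≠ 0)]
      exact Real.rpow_nonneg (norm_nonneg _) _
    · have hxpos : 0 < ‖x‖ := norm_pos_iff.mpr hx
      have hle : ‖x‖ ≤ nz ((finTwoArrowEquiv ℤ) x) := by
        rw [pi_norm_le_iff_of_nonneg (nz_nonneg _)]
        intro i
        have key : ∀ y z : ℤ, |(y : ℝ)| ≤ nz (y, z) := by
          intro y z
          rw [← Real.sqrt_sq_eq_abs]
          exact Real.sqrt_le_sqrt (le_add_of_nonneg_right (sq_nonneg _))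
        fin_cases i
        · simpa [Int.norm_eq_abs] using key (x 0) (x 1)
        · have : |((x 1 : ℤ) : ℝ)| ≤ nz (x 0, x 1) := by
            have := key (x 1) (x 0)
            rw [show nz (x 0, x 1) = nz (x 1, x 0) by simp [nz, add_comm]]
            exact this
          simpa [Int.norm_eq_abs] using this
      exact Real.rpow_le_rpow_of_nonpos hxpos hle (by linarith)
  have heq : (∑' j : ℤ × ℤ, ENNReal.ofReal (nz j ^ (-(2 * r))))
      = ∑' j : ℤ × ℤ, ((nz j ^ (-(2 * r))).toNNReal : ℝ≥0∞) := rfl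
  rw [heq, lt_top_iff_ne_top, ENNReal.tsum_coe_ne_top_iff_summable]
  exact hsum.toNNReal

/-- ℓ¹ bound for `a` in terms of `a 0` and `S r τ a`. -/
lemma l1_bound (r τ : ℝ) (hr : 1 < r) (hτ : 0 ≤ τ) (a : ℤ × ℤ → ℝ≥0∞) :
    ∑' j, a j ≤ a 0 +
      (∑' j : ℤ × ℤ, ENNReal.ofReal (nz j ^ (-(2 * r)))) ^ ((1 : ℝ) / 2) * S r τ a := by
  rw [ENNReal.tsum_eq_add_tsum_ite (0 : ℤ × ℤ)]
  refine add_le_add_right ?_ _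
  have hrest : (∑' j : ℤ × ℤ, ENNReal.ofReal (nz j ^ (-r)) * W r τ a j)
      ≤ (∑' j : ℤ × ℤ, ENNReal.ofReal (nz j ^ (-(2 * r)))) ^ ((1 : ℝ) / 2) * S r τ a := by
    refine (cs _ _).trans ?_
    rw [← S_eq]
    refine mul_le_mul_left (ENNReal.rpow_le_rpow ?_ (by norm_num)) _
    refine ENNReal.tsum_le_tsum fun j => ?_
    rw [← ENNReal.ofReal_pow (Real.rpow_nonneg (nz_nonneg j) _),
      ← Real.rpow_natCast (nz j ^ (-r)) 2,
      ← Real.rpow_mul (nz_nonneg j), show (-r) * ((2 : ℕ) : ℝ) = -(2 * r) by push_cast; ring]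
  refine le_trans (ENNReal.tsum_le_tsum fun j => ?_) hrest
  by_cases hj : j = 0
  · simp [hj]
  · simp only [hj, if_false]
    have hnz : (0 : ℝ) < nz j := lt_of_lt_of_le one_pos (one_le_nz hj)
    rw [W, ← mul_assoc, ← ENNReal.ofReal_mul (Real.rpow_nonneg (nz_nonneg j) _),
      ← mul_assoc, ← Real.rpow_add hnz, neg_add_cancel, Real.rpow_zero, one_mul]
    calc a j = 1 * a j := (one_mul _).symm
      _ ≤ ENNReal.ofReal (Real.exp (τ * nz j)) * a j := by
          refine mul_le_mul_left ?_ _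
          rw [ENNReal.one_le_ofReal]
          exact Real.one_le_exp (mul_nonneg hτ (nz_nonneg j))

/-- Fourier-coefficient form of the trilinear transport estimate
`|⟨A^r e^{τA}(f·∇g), A^r e^{τA}h⟩|` of Lemma A.1. -/
theorem trilinear_transport_estimate :
    ∀ r : ℝ, 1 < r → ∃ C : ℝ, 0 < C ∧ ∀ τ : ℝ, 0 ≤ τ → ∀ a b c : ℤ × ℤ → ℝ≥0∞,
      (∑' p : (ℤ × ℤ) × (ℤ × ℤ),
          a p.1 * ENNReal.ofReal (nz p.2) * b p.2
            * ENNReal.ofReal (nz (p.1 + p.2) ^ r * Real.exp (τ * nz (p.1 + p.2)))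
            * c (p.1 + p.2))
        ≤ ENNReal.ofReal C *
            ((a 0 + S r τ a) * S (r + 1 / 2) τ b * S (r + 1 / 2) τ c
              + S (r + 1 / 2) τ a * S (r + 1 / 2) τ b * S r τ c) := by
  intro r hr
  set Ksq : ℝ≥0∞ := ∑' j : ℤ × ℤ, ENNReal.ofReal (nz j ^ (-(2 * r))) with hKsq
  have hKtop : Ksq ^ ((1 : ℝ) / 2) ≠ ⊤ :=
    ENNReal.rpow_ne_top_of_nonneg (by norm_num) (Ksq_lt_top hr).ne
  refine ⟨(Ksq ^ ((1 : ℝ) / 2)).toReal + 1, by positivity, fun τ hτ a b c => ?_⟩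
  set Cq : ℝ≥0∞ := ENNReal.ofReal ((Ksq ^ ((1 : ℝ) / 2)).toReal + 1) with hCq
  have hC1 : (1 : ℝ≥0∞) ≤ Cq := by
    rw [hCq, ENNReal.one_le_ofReal]
    exact le_add_of_nonneg_left ENNReal.toReal_nonneg
  have hCK : Ksq ^ ((1 : ℝ) / 2) ≤ Cq := by
    rw [hCq, ENNReal.ofReal_add ENNReal.toReal_nonneg zero_le_one,
      ENNReal.ofReal_toReal hKtop]
    exact le_self_add
  -- Step 1: pointwise bound
  have step1 : (∑' p : (ℤ × ℤ) × (ℤ × ℤ),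
        a p.1 * ENNReal.ofReal (nz p.2) * b p.2
          * ENNReal.ofReal (nz (p.1 + p.2) ^ r * Real.exp (τ * nz (p.1 + p.2)))
          * c (p.1 + p.2))
      ≤ ∑' p : (ℤ × ℤ) × (ℤ × ℤ),
          a p.1 * (W (r + 1 / 2) τ b p.2 * W (r + 1 / 2) τ c (p.1 + p.2)) := by
    refine ENNReal.tsum_le_tsum fun p => ?_
    obtain ⟨j, k⟩ := p
    set m := j + k with hm
    have hreal : nz k * (nz m ^ r * Real.exp (τ * nz m))
        ≤ (nz k ^ (r + 1 / 2) * Real.exp (τ * nz k))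
          * (nz m ^ (r + 1 / 2) * Real.exp (τ * nz m)) := by
      have hw : ∀ (ρ : ℝ) (q : ℤ × ℤ), 0 ≤ nz q ^ ρ * Real.exp (τ * nz q) := fun ρ q =>
        mul_nonneg (Real.rpow_nonneg (nz_nonneg q) _) (Real.exp_nonneg _)
      by_cases hk : k = 0
      · rw [hk, nz_zero, zero_mul]
        exact mul_nonneg (mul_nonneg (Real.rpow_nonneg le_rfl _) (Real.exp_nonneg _))
          (hw _ _)
      by_cases hmz : m = 0
      · rw [hmz, nz_zero, Real.zero_rpow (by linarith : r ≠ 0), zero_mul, mul_zero]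
        exact mul_nonneg (hw _ _)
          (mul_nonneg (Real.rpow_nonneg le_rfl _) (Real.exp_nonneg _))
      have hk1 : 1 ≤ nz k := one_le_nz hk
      have hm1 : 1 ≤ nz m := one_le_nz hmz
      have h1 : nz k ≤ nz k ^ (r + 1 / 2) * Real.exp (τ * nz k) := by
        calc nz k = nz k ^ (1 : ℝ) := (Real.rpow_one _).symm
          _ ≤ nz k ^ (r + 1 / 2) := Real.rpow_le_rpow_of_exponent_le hk1 (by linarith)
          _ ≤ nz k ^ (r + 1 / 2) * Real.exp (τ * nz k) := by
              refine le_mul_of_one_le_right (Real.rpow_nonneg (nz_nonneg _) _) ?_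
              exact Real.one_le_exp (mul_nonneg hτ (nz_nonneg _))
      have h2 : nz m ^ r * Real.exp (τ * nz m)
          ≤ nz m ^ (r + 1 / 2) * Real.exp (τ * nz m) := by
        refine mul_le_mul_of_nonneg_right ?_ (Real.exp_nonneg _)
        exact Real.rpow_le_rpow_of_exponent_le hm1 (by linarith)
      exact mul_le_mul h1 h2
        (mul_nonneg (Real.rpow_nonneg (nz_nonneg _) _) (Real.exp_nonneg _)) (hw _ _)
    have key : ENNReal.ofReal (nz k) * ENNReal.ofReal (nz m ^ r * Real.exp (τ * nz m))
        ≤ ENNReal.ofReal (nz k ^ (r + 1 / 2) * Real.exp (τ * nz k))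
          * ENNReal.ofReal (nz m ^ (r + 1 / 2) * Real.exp (τ * nz m)) := by
      rw [← ENNReal.ofReal_mul (nz_nonneg k), ← ENNReal.ofReal_mul
        (mul_nonneg (Real.rpow_nonneg (nz_nonneg k) _) (Real.exp_nonneg _))]
      exact ENNReal.ofReal_le_ofReal hreal
    simp only [W]
    calc a j * ENNReal.ofReal (nz k) * b k
          * ENNReal.ofReal (nz m ^ r * Real.exp (τ * nz m)) * c m
        = a j * b k * c m
            * (ENNReal.ofReal (nz k) * ENNReal.ofReal (nz m ^ r * Real.exp (τ * nz m))) := by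
          ring
      _ ≤ a j * b k * c m
            * (ENNReal.ofReal (nz k ^ (r + 1 / 2) * Real.exp (τ * nz k))
              * ENNReal.ofReal (nz m ^ (r + 1 / 2) * Real.exp (τ * nz m))) :=
          mul_le_mul_right key _
      _ = a j * (ENNReal.ofReal (nz k ^ (r + 1 / 2) * Real.exp (τ * nz k)) * b k
            * (ENNReal.ofReal (nz m ^ (r + 1 / 2) * Real.exp (τ * nz m)) * c m)) := by
          ring
  -- Step 2: Young
  have step2 : (∑' p : (ℤ × ℤ) × (ℤ × ℤ),
        a p.1 * (W (r + 1 / 2) τ b p.2 * W (r + 1 / 2) τ c (p.1 + p.2)))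
      ≤ (∑' j, a j) * (S (r + 1 / 2) τ b * S (r + 1 / 2) τ c) := by
    have := young a (W (r + 1 / 2) τ b) (W (r + 1 / 2) τ c)
    rwa [← S_eq, ← S_eq] at this
  -- Step 3: ℓ¹ bound and constant
  have step3 : (∑' j, a j) ≤ Cq * (a 0 + S r τ a) := by
    refine (l1_bound r τ hr hτ a).trans ?_
    rw [mul_add]
    exact add_le_add (le_mul_of_one_le_left zero_le hC1)
      (mul_le_mul_left hCK _)
  calc (∑' p : (ℤ × ℤ) × (ℤ × ℤ),
        a p.1 * ENNReal.ofReal (nz p.2) * b p.2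
          * ENNReal.ofReal (nz (p.1 + p.2) ^ r * Real.exp (τ * nz (p.1 + p.2)))
          * c (p.1 + p.2))
      ≤ (∑' j, a j) * (S (r + 1 / 2) τ b * S (r + 1 / 2) τ c) := step1.trans step2
    _ ≤ Cq * (a 0 + S r τ a) * (S (r + 1 / 2) τ b * S (r + 1 / 2) τ c) :=
        mul_le_mul_left step3 _
    _ = Cq * ((a 0 + S r τ a) * S (r + 1 / 2) τ b * S (r + 1 / 2) τ c) := by ring
    _ ≤ Cq * ((a 0 + S r τ a) * S (r + 1 / 2) τ b * S (r + 1 / 2) τ c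
          + S (r + 1 / 2) τ a * S (r + 1 / 2) τ b * S r τ c) :=
        mul_le_mul_right le_self_add _

end
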